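/- Under the alignment condition there exists a constant c > 0, depending only on h₁, h₂, l and r but not on α, such that for every α > 0, sup over x ∈ ℝ² of |div g_α(x)| ≤ c·α/(l₀ + α). -/

import Mathlib

noncomputable section

/-- The factorized Hamiltonian `H(x₁,x₂) = h₁(x₁)·h₂(x₂)`. -/
def Ham (h₁ h₂ : ℝ → ℝ) : ℝ × ℝ → ℝ := fun x => h₁ x.1 * h₂ x.2

/-- The Hamiltonian vector field `ξ = ∇⊥H = (−h₁h₂', h₁'h₂)`. -/
def xiField (h₁ h₂ : ℝ → ℝ) : ℝ × ℝ → ℝ × ℝ :=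
  fun x => (-(h₁ x.1 * deriv h₂ x.2), deriv h₁ x.1 * h₂ x.2)

/-- The divergence of a vector field on `ℝ²`. -/
def divR2 (V : ℝ × ℝ → ℝ × ℝ) (x : ℝ × ℝ) : ℝ :=
  (fderiv ℝ V x (1, 0)).1 + (fderiv ℝ V x (0, 1)).2

/-- The inertial drift `g_α = β_α ν² Dξ ξ` under the alignment condition. -/
def driftG (h₁ h₂ l r : ℝ → ℝ) (α : ℝ) : ℝ × ℝ → ℝ × ℝ := fun x =>
  (α / (2 * (l (Ham h₁ h₂ x) + α)) * (r (Ham h₁ h₂ x) / l (Ham h₁ h₂ x)) ^ 2) •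
    fderiv ℝ (xiField h₁ h₂) x (xiField h₁ h₂ x)

open Set

private lemma bdd_of_periodic2 {L : ℝ} (hL : 0 < L) (G : ℝ × ℝ → ℝ)
    (hc : Continuous G)
    (hp1 : ∀ x : ℝ × ℝ, G (x.1 + L, x.2) = G x)
    (hp2 : ∀ x : ℝ × ℝ, G (x.1, x.2 + L) = G x) :
    ∃ M : ℝ, 0 ≤ M ∧ ∀ x, G x ≤ M := by
  obtain ⟨M, hM⟩ :=
    (isCompact_Icc.prod isCompact_Icc :
      IsCompact ((Icc (0:ℝ) L) ×ˢ (Icc (0:ℝ) L))).exists_bound_of_continuousOn hc.continuousOn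
  refine ⟨max M 0, le_max_right _ _, fun x => ?_⟩
  have p1 : Function.Periodic (fun t => G (t, x.2)) L := fun t => hp1 (t, x.2)
  obtain ⟨y1, hy1, he1⟩ := p1.exists_mem_Ico₀ hL x.1
  have p2 : Function.Periodic (fun t => G (y1, t)) L := fun t => hp2 (y1, t)
  obtain ⟨y2, hy2, he2⟩ := p2.exists_mem_Ico₀ hL x.2
  have hGx : G x = G (y1, y2) := by
    have : G (x.1, x.2) = G (y1, x.2) := he1
    rw [show (x.1, x.2) = x from rfl] at this
    exact this.trans he2
  have hmem : (y1, y2) ∈ (Icc (0:ℝ) L) ×ˢ (Icc (0:ℝ) L) :=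
    ⟨Ico_subset_Icc_self hy1, Ico_subset_Icc_self hy2⟩
  calc G x = G (y1, y2) := hGx
    _ ≤ ‖G (y1, y2)‖ := le_abs_self _
    _ ≤ M := hM _ hmem
    _ ≤ max M 0 := le_max_left _ _

private lemma fderiv_translate {E : Type*} [NormedAddCommGroup E] [NormedSpace ℝ E]
    {F : ℝ × ℝ → E} (hF : Differentiable ℝ F) (v : ℝ × ℝ)
    (hp : ∀ y, F (y + v) = F y) (x : ℝ × ℝ) :
    fderiv ℝ F (x + v) = fderiv ℝ F x := by
  have h1 : HasFDerivAt (fun y => F (y + v)) (fderiv ℝ F (x + v)) x := by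
    have := (hF (x + v)).hasFDerivAt.comp x ((hasFDerivAt_id x).add_const v)
    simp only [ContinuousLinearMap.comp_id] at this
    exact this
  rw [show (fun y => F (y + v)) = F from funext hp] at h1
  exact (h1.fderiv).symm

private lemma scalar_bound (l r : ℝ → ℝ) (l₀ α : ℝ) (hl₀ : 0 < l₀) (hα : 0 < α)
    (hlreg : ContDiff ℝ 2 l) (hrreg : ContDiff ℝ 2 r) (s : ℝ)
    (hls : l₀ ≤ l s) :
    ∃ d, HasDerivAt (fun t => α / (2 * (l t + α)) * (r t / l t) ^ 2) d s ∧
      |d| ≤ α / (l₀ + α) *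
        (|deriv l s| * (r s / l s) ^ 2 / (2 * l₀) +
          |r s / l s| * |(deriv r s * l s - r s * deriv l s) / (l s) ^ 2|) ∧
      |α / (2 * (l s + α)) * (r s / l s) ^ 2| ≤ α / (l₀ + α) * ((r s / l s) ^ 2 / 2) := by
  have hldiff : Differentiable ℝ l := hlreg.differentiable (by norm_num)
  have hrdiff : Differentiable ℝ r := hrreg.differentiable (by norm_num)
  have hm : 0 < l s := lt_of_lt_of_le hl₀ hls
  have hmne : l s ≠ 0 := ne_of_gt hm
  have hmα : 0 < l s + α := by linarith
  have hmα' : 0 < l₀ + α := by linarith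
  have h2 : (2 : ℝ) * (l s + α) ≠ 0 := by positivity
  have hp : HasDerivAt (fun t => 2 * (l t + α)) (2 * deriv l s) s :=
    (((hldiff s).hasDerivAt).add_const α).const_mul 2
  have hq : HasDerivAt (fun t => α / (2 * (l t + α)))
      ((0 * (2 * (l s + α)) - α * (2 * deriv l s)) / (2 * (l s + α)) ^ 2) s :=
    (hasDerivAt_const s α).div hp h2
  have hR : HasDerivAt (fun t => r t / l t)
      ((deriv r s * l s - r s * deriv l s) / (l s) ^ 2) s :=
    ((hrdiff s).hasDerivAt).div ((hldiff s).hasDerivAt) hmne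
  have hR2 := hR.pow 2
  have hfd := hq.mul hR2
  refine ⟨_, hfd, ?_, ?_⟩
  · set R := r s / l s with hR'
    set A := (deriv r s * l s - r s * deriv l s) / (l s) ^ 2 with hA'
    set dl := deriv l s with hdl'
    have h1 : |(0 * (2 * (l s + α)) - α * (2 * dl)) / (2 * (l s + α)) ^ 2 * R ^ 2|
        ≤ α / (l₀ + α) * (|dl| * R ^ 2 / (2 * l₀)) := by
      have e1 : |(0 * (2 * (l s + α)) - α * (2 * dl)) / (2 * (l s + α)) ^ 2 * R ^ 2|
          = α * (2 * |dl|) / (2 * (l s + α)) ^ 2 * R ^ 2 := by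
        rw [abs_mul, abs_div, abs_pow, abs_of_nonneg (sq_nonneg R)]
        congr 2
        · rw [show 0 * (2 * (l s + α)) - α * (2 * dl) = -(α * (2 * dl)) by ring, abs_neg,
            abs_mul, abs_mul, abs_of_pos hα, abs_two]
        · rw [abs_of_pos (by positivity : (0:ℝ) < 2 * (l s + α))]
      rw [e1]
      have e2 : α * (2 * |dl|) / (2 * (l s + α)) ^ 2 * R ^ 2
          = α / (l s + α) * (|dl| * R ^ 2 / (2 * (l s + α))) := by
        field_simp
      rw [e2]
      gcongr <;> linarith
    have h2' : |α / (2 * (l s + α)) * ((2 : ℕ) * R ^ (2 - 1) * A)|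
        ≤ α / (l₀ + α) * (|R| * |A|) := by
      have e1 : |α / (2 * (l s + α)) * ((2 : ℕ) * R ^ (2 - 1) * A)|
          = α / (2 * (l s + α)) * (2 * |R| * |A|) := by
        rw [abs_mul, abs_of_pos (by positivity : (0:ℝ) < α / (2 * (l s + α)))]
        congr 1
        rw [abs_mul, abs_mul]
        norm_num
      rw [e1]
      have e2 : α / (2 * (l s + α)) * (2 * |R| * |A|) = α / (l s + α) * (|R| * |A|) := by
        field_simp
      rw [e2]
      gcongr <;> first | positivity | linarith
    calc |(0 * (2 * (l s + α)) - α * (2 * dl)) / (2 * (l s + α)) ^ 2 * R ^ 2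
          + α / (2 * (l s + α)) * ((2 : ℕ) * R ^ (2 - 1) * A)|
        ≤ |(0 * (2 * (l s + α)) - α * (2 * dl)) / (2 * (l s + α)) ^ 2 * R ^ 2|
          + |α / (2 * (l s + α)) * ((2 : ℕ) * R ^ (2 - 1) * A)| := abs_add_le _ _
      _ ≤ α / (l₀ + α) * (|dl| * R ^ 2 / (2 * l₀)) + α / (l₀ + α) * (|R| * |A|) :=
          add_le_add h1 h2'
      _ = α / (l₀ + α) * (|dl| * R ^ 2 / (2 * l₀) + |R| * |A|) := by ring
  · set R := r s / l s
    rw [abs_of_nonneg (by positivity : (0:ℝ) ≤ α / (2 * (l s + α)) * R ^ 2)]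
    have e2 : α / (2 * (l s + α)) * R ^ 2 = α / (l s + α) * (R ^ 2 / 2) := by
      rw [div_mul_eq_mul_div, div_mul_div_comm, mul_comm 2 (l s + α)]
    rw [e2]
    gcongr <;> first | positivity | linarith

/-- Uniform bound on `div g_α`: there is a constant `c > 0` independent of `α`
such that `|div g_α| ≤ c α/(l₀ + α)` on all of `ℝ²`, for every `α > 0`. -/
theorem div_drift_uniform_bound
    (L l₀ r₀ : ℝ) (hL : 0 < L) (hl₀ : 0 < l₀) (hr₀ : 0 < r₀)
    (h₁ h₂ : ℝ → ℝ)
    (hreg₁ : ContDiff ℝ 3 h₁) (hreg₂ : ContDiff ℝ 3 h₂)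
    (hper₁ : Function.Periodic h₁ L) (hper₂ : Function.Periodic h₂ L)
    (hbd₁ : ∀ x : ℝ, |h₁ x| ≤ 1) (hbd₂ : ∀ x : ℝ, |h₂ x| ≤ 1)
    (hmax₁ : ∃ x : ℝ, |h₁ x| = 1) (hmax₂ : ∃ x : ℝ, |h₂ x| = 1)
    (l r : ℝ → ℝ) (hlreg : ContDiff ℝ 2 l) (hrreg : ContDiff ℝ 2 r)
    (hlb : ∀ s ∈ Set.Icc (-1 : ℝ) 1, l₀ ≤ l s)
    (hrb : ∀ s ∈ Set.Icc (-1 : ℝ) 1, r₀ ≤ (r s) ^ 2) :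
    ∃ c : ℝ, 0 < c ∧ ∀ α : ℝ, 0 < α → ∀ x : ℝ × ℝ,
      |divR2 (driftG h₁ h₂ l r α) x| ≤ c * α / (l₀ + α) := by
  classical
  set H : ℝ × ℝ → ℝ := Ham h₁ h₂ with hHdef
  set ξ : ℝ × ℝ → ℝ × ℝ := xiField h₁ h₂ with hξdef
  -- smoothness
  have hd₁ : ContDiff ℝ 2 (deriv h₁) := by
    have : ContDiff ℝ (2 + 1) h₁ := by norm_num; exact hreg₁
    exact (contDiff_succ_iff_deriv.mp this).2.2
  have hd₂ : ContDiff ℝ 2 (deriv h₂) := by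
    have : ContDiff ℝ (2 + 1) h₂ := by norm_num; exact hreg₂
    exact (contDiff_succ_iff_deriv.mp this).2.2
  have hξ : ContDiff ℝ 2 ξ := by
    apply ContDiff.prodMk
    · exact (((hreg₁.of_le (by norm_num)).comp contDiff_fst).mul (hd₂.comp contDiff_snd)).neg
    · exact (hd₁.comp contDiff_fst).mul ((hreg₂.of_le (by norm_num)).comp contDiff_snd)
  have hH : ContDiff ℝ 2 H :=
    ((hreg₁.of_le (by norm_num)).comp contDiff_fst).mul
      ((hreg₂.of_le (by norm_num)).comp contDiff_snd)
  have hHdiff : Differentiable ℝ H := hH.differentiable (by norm_num)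
  have hξdiff : Differentiable ℝ ξ := hξ.differentiable (by norm_num)
  -- periodicity
  have hpd₁ : ∀ t, deriv h₁ (t + L) = deriv h₁ t := by
    intro t
    rw [← deriv_comp_add_const]
    congr 1
    exact funext fun s => hper₁ s
  have hpd₂ : ∀ t, deriv h₂ (t + L) = deriv h₂ t := by
    intro t
    rw [← deriv_comp_add_const]
    congr 1
    exact funext fun s => hper₂ s
  have hξp1 : ∀ y : ℝ × ℝ, ξ (y + (L, 0)) = ξ y := by
    intro y
    show xiField h₁ h₂ (y.1 + L, y.2 + 0) = _
    simp [hξdef, xiField, hper₁ y.1, hpd₁ y.1]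
  have hξp2 : ∀ y : ℝ × ℝ, ξ (y + (0, L)) = ξ y := by
    intro y
    show xiField h₁ h₂ (y.1 + 0, y.2 + L) = _
    simp [hξdef, xiField, hper₂ y.2, hpd₂ y.2]
  have hHp1 : ∀ y : ℝ × ℝ, H (y + (L, 0)) = H y := by
    intro y
    show Ham h₁ h₂ (y.1 + L, y.2 + 0) = _
    simp [hHdef, Ham, hper₁ y.1]
  have hHp2 : ∀ y : ℝ × ℝ, H (y + (0, L)) = H y := by
    intro y
    show Ham h₁ h₂ (y.1 + 0, y.2 + L) = _
    simp [hHdef, Ham, hper₂ y.2]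
  -- the vector field F = Dξ ξ and its bounds
  set F : ℝ × ℝ → ℝ × ℝ := fun x => fderiv ℝ ξ x (ξ x) with hFdef
  have hF : ContDiff ℝ 1 F :=
    (hξ.fderiv_right (m := 1) (by norm_num)).clm_apply (hξ.of_le (by norm_num))
  have hFdiff : Differentiable ℝ F := hF.differentiable one_ne_zero
  have hFp1 : ∀ y, F (y + (L, 0)) = F y := by
    intro y
    simp only [hFdef]
    rw [fderiv_translate hξdiff (L, 0) hξp1, hξp1]
  have hFp2 : ∀ y, F (y + (0, L)) = F y := by
    intro y
    simp only [hFdef]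
    rw [fderiv_translate hξdiff (0, L) hξp2, hξp2]
  obtain ⟨MF, hMF0, hMF⟩ := bdd_of_periodic2 hL (fun x => ‖F x‖) hF.continuous.norm
    (fun x => by
      show ‖F (x.1 + L, x.2)‖ = ‖F x‖
      rw [show ((x.1 + L, x.2) : ℝ × ℝ) = x + (L, 0) by simp [Prod.ext_iff]]
      exact congrArg _ (hFp1 x))
    (fun x => by
      show ‖F (x.1, x.2 + L)‖ = ‖F x‖
      rw [show ((x.1, x.2 + L) : ℝ × ℝ) = x + (0, L) by simp [Prod.ext_iff]]
      exact congrArg _ (hFp2 x))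
  have hdFcont : Continuous fun x => ‖fderiv ℝ F x‖ :=
    ((hF.fderiv_right (m := 0) (by norm_num)).continuous).norm
  obtain ⟨MF', hMF'0, hMF'⟩ := bdd_of_periodic2 hL (fun x => ‖fderiv ℝ F x‖) hdFcont
    (fun x => by
      show ‖fderiv ℝ F (x.1 + L, x.2)‖ = ‖fderiv ℝ F x‖
      rw [show ((x.1 + L, x.2) : ℝ × ℝ) = x + (L, 0) by simp [Prod.ext_iff]]
      exact congrArg _ (fderiv_translate hFdiff (L, 0) hFp1 x))
    (fun x => by
      show ‖fderiv ℝ F (x.1, x.2 + L)‖ = ‖fderiv ℝ F x‖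
      rw [show ((x.1, x.2 + L) : ℝ × ℝ) = x + (0, L) by simp [Prod.ext_iff]]
      exact congrArg _ (fderiv_translate hFdiff (0, L) hFp2 x))
  have hdHcont : Continuous fun x => ‖fderiv ℝ H x‖ :=
    ((hH.fderiv_right (m := 0) (by norm_num)).continuous).norm
  obtain ⟨MH, hMH0, hMH⟩ := bdd_of_periodic2 hL (fun x => ‖fderiv ℝ H x‖) hdHcont
    (fun x => by
      show ‖fderiv ℝ H (x.1 + L, x.2)‖ = ‖fderiv ℝ H x‖
      rw [show ((x.1 + L, x.2) : ℝ × ℝ) = x + (L, 0) by simp [Prod.ext_iff]]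
      exact congrArg _ (fderiv_translate hHdiff (L, 0) hHp1 x))
    (fun x => by
      show ‖fderiv ℝ H (x.1, x.2 + L)‖ = ‖fderiv ℝ H x‖
      rw [show ((x.1, x.2 + L) : ℝ × ℝ) = x + (0, L) by simp [Prod.ext_iff]]
      exact congrArg _ (fderiv_translate hHdiff (0, L) hHp2 x))
  -- range of H
  have hrange : ∀ x : ℝ × ℝ, H x ∈ Icc (-1 : ℝ) 1 := by
    intro x
    have : |H x| ≤ 1 := by
      show |h₁ x.1 * h₂ x.2| ≤ 1
      rw [abs_mul]
      exact mul_le_one₀ (hbd₁ x.1) (abs_nonneg _) (hbd₂ x.2)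
    exact abs_le.mp this
  -- sup bounds on [-1,1] for the scalar factors
  have hdl : Continuous (deriv l) := by
    have : ContDiff ℝ (1 + 1) l := by norm_num; exact hlreg
    exact (contDiff_succ_iff_deriv.mp this).2.2.continuous
  have hdr : Continuous (deriv r) := by
    have : ContDiff ℝ (1 + 1) r := by norm_num; exact hrreg
    exact (contDiff_succ_iff_deriv.mp this).2.2.continuous
  have hlne : ∀ s ∈ Icc (-1 : ℝ) 1, l s ≠ 0 := fun s hs =>
    ne_of_gt (lt_of_lt_of_le hl₀ (hlb s hs))
  have hRcont : ContinuousOn (fun s => r s / l s) (Icc (-1 : ℝ) 1) :=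
    hrreg.continuous.continuousOn.div hlreg.continuous.continuousOn hlne
  have hu₁ : ContinuousOn (fun s => (r s / l s) ^ 2 / 2) (Icc (-1 : ℝ) 1) :=
    (hRcont.pow 2).div_const 2
  have hAcont : ContinuousOn
      (fun s => (deriv r s * l s - r s * deriv l s) / (l s) ^ 2) (Icc (-1 : ℝ) 1) :=
    ((hdr.continuousOn.mul hlreg.continuous.continuousOn).sub
      (hrreg.continuous.continuousOn.mul hdl.continuousOn)).div
      (hlreg.continuous.continuousOn.pow 2) (fun s hs => pow_ne_zero 2 (hlne s hs))
  have hEcont : ContinuousOn (fun s =>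
      |deriv l s| * (r s / l s) ^ 2 / (2 * l₀) +
        |r s / l s| * |(deriv r s * l s - r s * deriv l s) / (l s) ^ 2|)
      (Icc (-1 : ℝ) 1) :=
    ((hdl.continuousOn.abs.mul (hRcont.pow 2)).div_const (2 * l₀)).add
      (hRcont.abs.mul hAcont.abs)
  obtain ⟨Cu, hCu⟩ := isCompact_Icc.exists_bound_of_continuousOn hu₁
  obtain ⟨CE, hCE⟩ := isCompact_Icc.exists_bound_of_continuousOn hEcont
  -- the constant
  set Cu' := max Cu 0 with hCu'
  set CE' := max CE 0 with hCE'
  have hK : (0:ℝ) ≤ Cu' * MF' + CE' * (MH * MF) :=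
    add_nonneg (mul_nonneg (le_max_right _ _) hMF'0)
      (mul_nonneg (le_max_right _ _) (mul_nonneg hMH0 hMF0))
  refine ⟨2 * (Cu' * MF' + CE' * (MH * MF)) + 1, by linarith, ?_⟩
  intro α hα x
  have hmα' : (0:ℝ) < l₀ + α := by linarith
  have hq0 : (0:ℝ) ≤ α / (l₀ + α) := by positivity
  have hls : l₀ ≤ l (H x) := hlb _ (hrange x)
  obtain ⟨d, hd, hdb, hvb⟩ := scalar_bound l r l₀ α hl₀ hα hlreg hrreg (H x) hls
  have hHfd : HasFDerivAt H (fderiv ℝ H x) x := (hHdiff x).hasFDerivAt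
  have hφ : HasFDerivAt (fun y => α / (2 * (l (H y) + α)) * (r (H y) / l (H y)) ^ 2)
      (d • fderiv ℝ H x) x := by
    have := hd.comp_hasFDerivAt x hHfd
    simpa [Function.comp_def] using this
  have hFat : HasFDerivAt F (fderiv ℝ F x) x := (hFdiff x).hasFDerivAt
  have hg : HasFDerivAt (driftG h₁ h₂ l r α)
      ((α / (2 * (l (H x) + α)) * (r (H x) / l (H x)) ^ 2) • fderiv ℝ F x +
        (d • fderiv ℝ H x).smulRight (F x)) x := hφ.smul hFat
  set Dg := (α / (2 * (l (H x) + α)) * (r (H x) / l (H x)) ^ 2) • fderiv ℝ F x +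
    (d • fderiv ℝ H x).smulRight (F x) with hDgdef
  -- bounds on the scalar factor and its derivative
  have hφb : |α / (2 * (l (H x) + α)) * (r (H x) / l (H x)) ^ 2| ≤ α / (l₀ + α) * Cu' := by
    refine le_trans hvb ?_
    have h1 : (r (H x) / l (H x)) ^ 2 / 2 ≤ Cu' :=
      le_trans (le_abs_self _) (le_trans (hCu _ (hrange x)) (le_max_left _ _))
    exact mul_le_mul_of_nonneg_left h1 hq0
  have hdb' : |d| ≤ α / (l₀ + α) * CE' := by
    refine le_trans hdb ?_
    have h1 : |deriv l (H x)| * (r (H x) / l (H x)) ^ 2 / (2 * l₀) +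
        |r (H x) / l (H x)| *
          |(deriv r (H x) * l (H x) - r (H x) * deriv l (H x)) / (l (H x)) ^ 2| ≤ CE' :=
      le_trans (le_abs_self _) (le_trans (hCE _ (hrange x)) (le_max_left _ _))
    exact mul_le_mul_of_nonneg_left h1 hq0
  -- bound on ‖Dg v‖ for unit v
  have key : ∀ v : ℝ × ℝ, ‖v‖ = 1 →
      ‖Dg v‖ ≤ α / (l₀ + α) * Cu' * MF' + α / (l₀ + α) * CE' * (MH * MF) := by
    intro v hv
    rw [hDgdef, ContinuousLinearMap.add_apply, ContinuousLinearMap.smul_apply,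
      ContinuousLinearMap.smulRight_apply, ContinuousLinearMap.smul_apply]
    refine le_trans (norm_add_le _ _) (add_le_add ?_ ?_)
    · rw [norm_smul]
      have h1 : ‖(fderiv ℝ F x) v‖ ≤ MF' := by
        calc ‖(fderiv ℝ F x) v‖ ≤ ‖fderiv ℝ F x‖ * ‖v‖ := (fderiv ℝ F x).le_opNorm v
          _ = ‖fderiv ℝ F x‖ := by rw [hv, mul_one]
          _ ≤ MF' := hMF' x
      have h2 : ‖α / (2 * (l (H x) + α)) * (r (H x) / l (H x)) ^ 2‖ ≤ α / (l₀ + α) * Cu' := by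
        rw [Real.norm_eq_abs]; exact hφb
      calc ‖α / (2 * (l (H x) + α)) * (r (H x) / l (H x)) ^ 2‖ * ‖(fderiv ℝ F x) v‖
          ≤ (α / (l₀ + α) * Cu') * MF' :=
            mul_le_mul h2 h1 (norm_nonneg _) (by positivity)
        _ = α / (l₀ + α) * Cu' * MF' := by ring
    · rw [norm_smul, norm_smul]
      have h1 : ‖(fderiv ℝ H x) v‖ ≤ MH := by
        calc ‖(fderiv ℝ H x) v‖ ≤ ‖fderiv ℝ H x‖ * ‖v‖ := (fderiv ℝ H x).le_opNorm v
          _ = ‖fderiv ℝ H x‖ := by rw [hv, mul_one]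
          _ ≤ MH := hMH x
      have h2 : ‖d‖ ≤ α / (l₀ + α) * CE' := by rw [Real.norm_eq_abs]; exact hdb'
      calc ‖d‖ * ‖(fderiv ℝ H x) v‖ * ‖F x‖
          ≤ (α / (l₀ + α) * CE') * MH * MF := by
            refine mul_le_mul (mul_le_mul h2 h1 (norm_nonneg _) (by positivity))
              (hMF x) (norm_nonneg _) (by positivity)
        _ = α / (l₀ + α) * CE' * (MH * MF) := by ring
  -- conclude
  have hnorm1 : ‖((1:ℝ), (0:ℝ))‖ = 1 := by simp [Prod.norm_def]
  have hnorm2 : ‖((0:ℝ), (1:ℝ))‖ = 1 := by simp [Prod.norm_def]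
  have hdiv : divR2 (driftG h₁ h₂ l r α) x = (Dg (1, 0)).1 + (Dg (0, 1)).2 := by
    unfold divR2
    rw [hg.fderiv]
  calc |divR2 (driftG h₁ h₂ l r α) x|
      ≤ ‖Dg (1, 0)‖ + ‖Dg (0, 1)‖ := by
        rw [hdiv]
        refine le_trans (abs_add_le _ _) (add_le_add ?_ ?_)
        · have := norm_fst_le (Dg (1, 0)); rwa [Real.norm_eq_abs] at this
        · have := norm_snd_le (Dg (0, 1)); rwa [Real.norm_eq_abs] at this
    _ ≤ (α / (l₀ + α) * Cu' * MF' + α / (l₀ + α) * CE' * (MH * MF)) +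
        (α / (l₀ + α) * Cu' * MF' + α / (l₀ + α) * CE' * (MH * MF)) :=
          add_le_add (key _ hnorm1) (key _ hnorm2)
    _ = α / (l₀ + α) * (2 * (Cu' * MF' + CE' * (MH * MF))) := by ring
    _ ≤ α / (l₀ + α) * (2 * (Cu' * MF' + CE' * (MH * MF)) + 1) := by
        refine mul_le_mul_of_nonneg_left (by linarith) hq0
    _ = (2 * (Cu' * MF' + CE' * (MH * MF)) + 1) * α / (l₀ + α) := by ring
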